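/- arXiv:2110.07392 — 4 statements merged into one kernel-verified Lean document; each statement's English description precedes it below -/
import Mathlib

section
/- For the sequence α_t = (H+1)/(H+t) with H ≥ 1, define α_t^0 = ∏_{i=1}^t (1-α_i) and α_t^i = α_i ∏_{j=i+1}^t (1-α_j). Then for every t ≥ 1, 1/√t ≤ ∑_{i=1}^t α_t^i/√i ≤ 2/√t. -/
open Finset

noncomputable def qa (H i : ℕ) : ℝ := ((H : ℝ) + 1) / ((H : ℝ) + i)

noncomputable def qw (H t i : ℕ) : ℝ :=
  qa H i * ∏ j ∈ Finset.Icc (i + 1) t, (1 - qa H j)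

lemma qden_pos (H i : ℕ) (hH : 1 ≤ H) : (0:ℝ) < (H : ℝ) + i := by
  have : (1:ℝ) ≤ H := by exact_mod_cast hH
  positivity

lemma qa_pos (H i : ℕ) (hH : 1 ≤ H) : 0 < qa H i := by
  unfold qa
  have h1 : (1:ℝ) ≤ H := by exact_mod_cast hH
  have := qden_pos H i hH
  positivity

lemma one_sub_qa_nonneg (H j : ℕ) (hH : 1 ≤ H) (hj : 1 ≤ j) : 0 ≤ 1 - qa H j := by
  have h := qden_pos H j hH
  have hj' : (1:ℝ) ≤ j := by exact_mod_cast hj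
  have : qa H j ≤ 1 := by
    unfold qa
    rw [div_le_one h]
    linarith
  linarith

lemma qw_nonneg (H t i : ℕ) (hH : 1 ≤ H) : 0 ≤ qw H t i := by
  unfold qw
  apply mul_nonneg (qa_pos H i hH).le
  apply Finset.prod_nonneg
  intro j hj
  exact one_sub_qa_nonneg H j hH (by simp at hj; omega)

lemma qw_succ (H t i : ℕ) (hit : i ≤ t) :
    qw H (t + 1) i = qw H t i * (1 - qa H (t + 1)) := by
  unfold qw
  rw [Finset.prod_Icc_succ_top (by omega : i + 1 ≤ t + 1)]
  ring

lemma qw_self (H t : ℕ) : qw H t t = qa H t := by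
  unfold qw
  rw [Finset.Icc_eq_empty (by omega), Finset.prod_empty, mul_one]

lemma qa_one (H : ℕ) (hH : 1 ≤ H) : qa H 1 = 1 := by
  unfold qa
  have h : (0:ℝ) < (H:ℝ) + 1 := by positivity
  rw [Nat.cast_one]
  exact div_self (ne_of_gt h)

lemma sum_qw (H t : ℕ) (hH : 1 ≤ H) (ht : 1 ≤ t) :
    ∑ i ∈ Finset.Icc 1 t, qw H t i = 1 := by
  induction t, ht using Nat.le_induction with
  | base => simp [qw_self, qa_one H hH]
  | succ t ht ih =>
    rw [Finset.sum_Icc_succ_top (by omega : 1 ≤ t + 1), qw_self]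
    have hrw : ∀ i ∈ Finset.Icc 1 t, qw H (t+1) i = qw H t i * (1 - qa H (t+1)) := by
      intro i hi
      exact qw_succ H t i (by simp at hi; omega)
    rw [Finset.sum_congr rfl hrw, ← Finset.sum_mul, ih]
    ring

lemma qsqrt_pos (n : ℕ) (hn : 1 ≤ n) : 0 < Real.sqrt n := by
  apply Real.sqrt_pos.mpr
  exact_mod_cast Nat.lt_of_lt_of_le Nat.zero_lt_one hn

lemma upper_bound (H t : ℕ) (hH : 1 ≤ H) (ht : 1 ≤ t) :
    ∑ i ∈ Finset.Icc 1 t, qw H t i / Real.sqrt i ≤ 2 / Real.sqrt t := by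
  induction t, ht using Nat.le_induction with
  | base => simp [qw_self, qa_one H hH]
  | succ t ht ih =>
    have hrw : ∀ i ∈ Finset.Icc 1 t,
        qw H (t+1) i / Real.sqrt i = (qw H t i / Real.sqrt i) * (1 - qa H (t+1)) := by
      intro i hi
      rw [qw_succ H t i (by simp at hi; omega)]
      ring
    rw [Finset.sum_Icc_succ_top (by omega : 1 ≤ t + 1), qw_self,
      Finset.sum_congr rfl hrw, ← Finset.sum_mul]
    have hcast : ((t + 1 : ℕ) : ℝ) = (t:ℝ) + 1 := by push_cast; ring
    rw [hcast]
    set s0 := Real.sqrt t with hs0def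
    set s1 := Real.sqrt ((t:ℝ) + 1) with hs1def
    have ht0 : (0:ℝ) ≤ t := by positivity
    have ht1 : (1:ℝ) ≤ t := by exact_mod_cast ht
    have hH1 : (1:ℝ) ≤ H := by exact_mod_cast hH
    have hH0 : (0:ℝ) ≤ H := by positivity
    have hs0 : 0 < s0 := qsqrt_pos t ht
    have hs1 : 0 < s1 := Real.sqrt_pos.mpr (by positivity)
    have hsq0 : s0 ^ 2 = (t:ℝ) := Real.sq_sqrt ht0
    have hsq1 : s1 ^ 2 = (t:ℝ) + 1 := Real.sq_sqrt (by positivity)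
    have hD : (0:ℝ) < (H:ℝ) + ((t:ℝ) + 1) := by positivity
    have haeq : qa H (t+1) = ((H:ℝ) + 1) / ((H:ℝ) + ((t:ℝ) + 1)) := by
      unfold qa
      push_cast
      ring_nf
    have h1aeq : 1 - qa H (t+1) = (t:ℝ) / ((H:ℝ) + ((t:ℝ) + 1)) := by
      rw [haeq]
      field_simp
      ring
    rw [h1aeq, haeq]
    -- key inequality: 2 t s1 ≤ (H + 2t + 1) s0
    have hpoly : 4 * (t:ℝ)^2 * ((t:ℝ) + 1) ≤ ((H:ℝ) + 2*t + 1)^2 * t := by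
      nlinarith [mul_nonneg ht0 (sq_nonneg (H:ℝ)), mul_nonneg (mul_nonneg hH0 ht0) ht0,
        mul_nonneg hH0 ht0]
    have hsq : (2 * (t:ℝ) * s1) ^ 2 ≤ (((H:ℝ) + 2*t + 1) * s0) ^ 2 := by
      rw [mul_pow, mul_pow, mul_pow, hsq0, hsq1]
      nlinarith [hpoly]
    have hL : 0 ≤ 2 * (t:ℝ) * s1 := by positivity
    have hR : 0 ≤ ((H:ℝ) + 2*t + 1) * s0 := by positivity
    have key : 2 * (t:ℝ) * s1 ≤ ((H:ℝ) + 2*t + 1) * s0 := by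
      calc 2 * (t:ℝ) * s1 = Real.sqrt ((2 * (t:ℝ) * s1) ^ 2) := (Real.sqrt_sq hL).symm
        _ ≤ Real.sqrt ((((H:ℝ) + 2*t + 1) * s0) ^ 2) := Real.sqrt_le_sqrt hsq
        _ = ((H:ℝ) + 2*t + 1) * s0 := Real.sqrt_sq hR
    have final : ((H:ℝ) + 1) / ((H:ℝ) + ((t:ℝ) + 1)) / s1
        + (2 / s0) * ((t:ℝ) / ((H:ℝ) + ((t:ℝ) + 1))) ≤ 2 / s1 := by
      have e1 : ((H:ℝ) + 1) / ((H:ℝ) + ((t:ℝ) + 1)) / s1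
          + (2 / s0) * ((t:ℝ) / ((H:ℝ) + ((t:ℝ) + 1)))
          = (((H:ℝ) + 1) * s0 + 2 * t * s1) / (((H:ℝ) + ((t:ℝ) + 1)) * s0 * s1) := by
        field_simp
      have e2 : 2 / s1 = 2 * ((H:ℝ) + ((t:ℝ) + 1)) * s0
          / (((H:ℝ) + ((t:ℝ) + 1)) * s0 * s1) := by
        field_simp
      rw [e1, e2, div_le_div_iff_of_pos_right (by positivity : (0:ℝ) < ((H:ℝ) + ((t:ℝ) + 1)) * s0 * s1)]
      have expand : 2 * ((H:ℝ) + ((t:ℝ) + 1)) * s0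
          = ((H:ℝ) + 1) * s0 + ((H:ℝ) + 2*t + 1) * s0 := by ring
      linarith [key]
    have step1 : (∑ i ∈ Finset.Icc 1 t, qw H t i / Real.sqrt i)
          * ((t:ℝ) / ((H:ℝ) + ((t:ℝ) + 1)))
        ≤ (2 / s0) * ((t:ℝ) / ((H:ℝ) + ((t:ℝ) + 1))) :=
      mul_le_mul_of_nonneg_right ih (by positivity)
    linarith [step1, final]

lemma lower_bound (H t : ℕ) (hH : 1 ≤ H) (ht : 1 ≤ t) :
    1 / Real.sqrt t ≤ ∑ i ∈ Finset.Icc 1 t, qw H t i / Real.sqrt i := by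
  have h1 : (1:ℝ) / Real.sqrt t = ∑ i ∈ Finset.Icc 1 t, qw H t i / Real.sqrt t := by
    rw [← Finset.sum_div, sum_qw H t hH ht]
  rw [h1]
  apply Finset.sum_le_sum
  intro i hi
  simp only [Finset.mem_Icc] at hi
  have hsi : 0 < Real.sqrt i := qsqrt_pos i hi.1
  have hile : Real.sqrt i ≤ Real.sqrt t := by
    apply Real.sqrt_le_sqrt
    exact_mod_cast hi.2
  exact div_le_div_of_nonneg_left (qw_nonneg H t i hH) hsi hile

/-- For `α_i = (H+1)/(H+i)` with `H ≥ 1`, and weights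
`α_t^i = α_i * ∏_{j=i+1}^t (1 - α_j)`, for every `t ≥ 1`,
`1/√t ≤ ∑_{i=1}^t α_t^i/√i ≤ 2/√t`. -/
theorem stmt0 (H t : ℕ) (hH : 1 ≤ H) (ht : 1 ≤ t) :
    1 / Real.sqrt t ≤
      ∑ i ∈ Finset.Icc 1 t,
        (((H : ℝ) + 1) / ((H : ℝ) + i) *
          ∏ j ∈ Finset.Icc (i + 1) t, (1 - ((H : ℝ) + 1) / ((H : ℝ) + j))) / Real.sqrt i ∧
    ∑ i ∈ Finset.Icc 1 t,
        (((H : ℝ) + 1) / ((H : ℝ) + i) *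
          ∏ j ∈ Finset.Icc (i + 1) t, (1 - ((H : ℝ) + 1) / ((H : ℝ) + j))) / Real.sqrt i ≤
      2 / Real.sqrt t := by
  have hl := lower_bound H t hH ht
  have hu := upper_bound H t hH ht
  simp only [qw, qa] at hl hu
  exact ⟨hl, hu⟩
end

section
/- For the sequence α_t = (H+1)/(H+t) with H ≥ 1, define α_t^i = α_i ∏_{j=i+1}^t (1-α_j). Then for every t ≥ 1, max_{1 ≤ i ≤ t} α_t^i ≤ 2H/t. -/
open Finset

lemma key_bound (H : ℕ) (hH : 1 ≤ H) (i : ℕ) (hi : 1 ≤ i) :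
    ∀ t : ℕ, i ≤ t →
      ((H : ℝ) + 1) / ((H : ℝ) + i) *
          ∏ j ∈ Finset.Icc (i + 1) t, (1 - ((H : ℝ) + 1) / ((H : ℝ) + j)) ≤
        ((H : ℝ) + 1) / ((H : ℝ) + t) := by
  intro t
  induction t with
  | zero => intro h; omega
  | succ t ih =>
    intro hit
    rcases Nat.lt_or_ge t i with h | h
    · have : i = t + 1 := by omega
      subst this
      rw [Finset.Icc_eq_empty (by omega : ¬ (t + 1 + 1 ≤ t + 1))]
      simp
    · have hprod := ih h
      have hH1 : (1 : ℝ) ≤ H := by exact_mod_cast hH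
      have hi1 : (1 : ℝ) ≤ i := by exact_mod_cast hi
      have hti : (i : ℝ) ≤ t := by exact_mod_cast h
      rw [Finset.prod_Icc_succ_top (by omega : i + 1 ≤ t + 1), ← mul_assoc]
      push_cast
      have hpos : (0 : ℝ) < (H : ℝ) + t := by linarith
      have hpos1 : (0 : ℝ) < (H : ℝ) + (t + 1) := by linarith
      have hposi : (0 : ℝ) < (H : ℝ) + i := by linarith
      have hfac : (1 : ℝ) - ((H : ℝ) + 1) / ((H : ℝ) + (t + 1)) = (t : ℝ) / ((H : ℝ) + (t + 1)) := by
        field_simp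
        ring
      rw [hfac]
      have hfacnn : (0 : ℝ) ≤ (t : ℝ) / ((H : ℝ) + (t + 1)) := by positivity
      calc ((H : ℝ) + 1) / ((H : ℝ) + i) *
              (∏ j ∈ Finset.Icc (i + 1) t, (1 - ((H : ℝ) + 1) / ((H : ℝ) + j))) *
              ((t : ℝ) / ((H : ℝ) + (t + 1)))
          ≤ ((H : ℝ) + 1) / ((H : ℝ) + t) * ((t : ℝ) / ((H : ℝ) + (t + 1))) := by
            exact mul_le_mul_of_nonneg_right hprod hfacnn
        _ ≤ ((H : ℝ) + 1) / ((H : ℝ) + (t + 1)) := by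
            rw [div_mul_div_comm, div_le_div_iff₀ (by positivity) hpos1]
            nlinarith [mul_le_mul_of_nonneg_left (mul_le_mul_of_nonneg_right
              (show (t:ℝ) ≤ (H:ℝ)+t by linarith) hpos1.le) (show (0:ℝ) ≤ (H:ℝ)+1 by linarith)]

/-- For `α_i = (H+1)/(H+i)` with `H ≥ 1`, the weights
`α_t^i = α_i * ∏_{j=i+1}^t (1 - α_j)` satisfy `max_{1 ≤ i ≤ t} α_t^i ≤ 2H/t`. -/
theorem stmt1 (H t : ℕ) (hH : 1 ≤ H) (ht : 1 ≤ t) :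
    ∀ i : ℕ, 1 ≤ i → i ≤ t →
      ((H : ℝ) + 1) / ((H : ℝ) + i) *
          ∏ j ∈ Finset.Icc (i + 1) t, (1 - ((H : ℝ) + 1) / ((H : ℝ) + j)) ≤
        2 * (H : ℝ) / t := by
  intro i hi hit
  have h1 := key_bound H hH i hi t hit
  have hH1 : (1 : ℝ) ≤ H := by exact_mod_cast hH
  have ht1 : (1 : ℝ) ≤ t := by exact_mod_cast ht
  have h2 : ((H : ℝ) + 1) / ((H : ℝ) + t) ≤ 2 * (H : ℝ) / t := by
    rw [div_le_div_iff₀ (by linarith) (by linarith)]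
    nlinarith
  linarith
end

section
/- For the sequence α_t = (H+1)/(H+t) with H ≥ 1, define α_t^i = α_i ∏_{j=i+1}^t (1-α_j). Then for every t ≥ 1, ∑_{i=1}^t (α_t^i)^2 ≤ 2H/t. -/
open Finset

private lemma hpos (H : ℕ) (hH : 1 ≤ H) (j : ℕ) : (0:ℝ) < (H:ℝ) + j := by
  have h1 : (1:ℝ) ≤ (H:ℝ) := by exact_mod_cast hH
  have h2 : (0:ℝ) ≤ (j:ℝ) := Nat.cast_nonneg j
  linarith

private lemma one_sub_alpha_nonneg (H : ℕ) (hH : 1 ≤ H) {j : ℕ} (hj : 1 ≤ j) :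
    0 ≤ 1 - ((H : ℝ) + 1) / ((H : ℝ) + j) := by
  have h1 := hpos H hH j
  rw [sub_nonneg, div_le_one h1]
  have : (1:ℝ) ≤ (j:ℝ) := by exact_mod_cast hj
  linarith

private lemma f_nonneg (H : ℕ) (hH : 1 ≤ H) (i t : ℕ) :
    0 ≤ ((H : ℝ) + 1) / ((H : ℝ) + i) *
        ∏ j ∈ Finset.Icc (i + 1) t, (1 - ((H : ℝ) + 1) / ((H : ℝ) + j)) := by
  apply mul_nonneg
  · apply div_nonneg
    · have := hpos H hH 1; push_cast at this ⊢; linarith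
    · exact le_of_lt (hpos H hH i)
  · apply Finset.prod_nonneg
    intro j hj
    exact one_sub_alpha_nonneg H hH (by simp at hj; omega)

private lemma step_ineq (H : ℕ) (hH : 1 ≤ H) (n : ℕ) :
    ((H:ℝ)+1)/((H:ℝ)+n) * (1 - ((H:ℝ)+1)/((H:ℝ)+((n+1:ℕ):ℝ))) ≤ ((H:ℝ)+1)/((H:ℝ)+((n+1:ℕ):ℝ)) := by
  have hH1 : (1:ℝ) ≤ (H:ℝ) := by exact_mod_cast hH
  have hn : (0:ℝ) ≤ (n:ℝ) := Nat.cast_nonneg n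
  push_cast
  have h1 : (0:ℝ) < (H:ℝ) + n := by linarith
  have h2 : (0:ℝ) < (H:ℝ) + n + 1 := by linarith
  rw [div_mul_eq_mul_div, div_le_div_iff₀ h1 (by linarith)]
  have e : (1 - ((H:ℝ)+1)/((H:ℝ)+(n+1))) = (n:ℝ)/((H:ℝ)+(n+1)) := by
    field_simp
    ring
  ring_nf
  ring_nf at e
  nlinarith [e]

private lemma f_le (H : ℕ) (hH : 1 ≤ H) (i : ℕ) (hi : 1 ≤ i) :
    ∀ t, i ≤ t →
      ((H : ℝ) + 1) / ((H : ℝ) + i) *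
          ∏ j ∈ Finset.Icc (i + 1) t, (1 - ((H : ℝ) + 1) / ((H : ℝ) + j)) ≤
        ((H : ℝ) + 1) / ((H : ℝ) + t) := by
  intro t
  induction t with
  | zero => intro h; omega
  | succ n ih =>
    intro h
    rcases eq_or_lt_of_le h with heq | hlt
    · subst heq
      rw [Finset.Icc_eq_empty (by omega), Finset.prod_empty, mul_one]
    · have hin : i ≤ n := by omega
      rw [Finset.prod_Icc_succ_top (by omega : i + 1 ≤ n + 1), ← mul_assoc]
      have h1 : 0 ≤ 1 - ((H : ℝ) + 1) / ((H : ℝ) + (n + 1 : ℕ)) :=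
        one_sub_alpha_nonneg H hH (by omega)
      calc ((H : ℝ) + 1) / ((H : ℝ) + i) *
              (∏ j ∈ Finset.Icc (i + 1) n, (1 - ((H : ℝ) + 1) / ((H : ℝ) + j))) *
              (1 - ((H : ℝ) + 1) / ((H : ℝ) + (n + 1 : ℕ)))
          ≤ ((H : ℝ) + 1) / ((H : ℝ) + n) *
              (1 - ((H : ℝ) + 1) / ((H : ℝ) + (n + 1 : ℕ))) :=
            mul_le_mul_of_nonneg_right (ih hin) h1
        _ ≤ ((H : ℝ) + 1) / ((H : ℝ) + (n + 1 : ℕ)) := step_ineq H hH n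

private lemma f_sum (H : ℕ) (hH : 1 ≤ H) :
    ∀ t : ℕ, 1 ≤ t →
      ∑ i ∈ Finset.Icc 1 t,
          (((H : ℝ) + 1) / ((H : ℝ) + i) *
            ∏ j ∈ Finset.Icc (i + 1) t, (1 - ((H : ℝ) + 1) / ((H : ℝ) + j))) = 1 := by
  intro t
  induction t with
  | zero => intro h; omega
  | succ n ih =>
    intro _
    rcases Nat.eq_or_lt_of_le (by omega : 1 ≤ n + 1) with heq | hlt
    · rw [← heq]
      norm_num
      have h1 := hpos H hH 1
      push_cast at h1 ⊢
      exact h1.ne'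
    · have hn : 1 ≤ n := by omega
      rw [Finset.sum_Icc_succ_top (by omega : 1 ≤ n + 1)]
      have hterm : ∏ j ∈ Finset.Icc (n + 1 + 1) (n + 1),
          (1 - ((H : ℝ) + 1) / ((H : ℝ) + j)) = 1 := by
        rw [Finset.Icc_eq_empty (by omega), Finset.prod_empty]
      rw [hterm, mul_one]
      have hsplit : ∀ i ∈ Finset.Icc 1 n,
          (((H : ℝ) + 1) / ((H : ℝ) + i) *
            ∏ j ∈ Finset.Icc (i + 1) (n + 1), (1 - ((H : ℝ) + 1) / ((H : ℝ) + j))) =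
          (((H : ℝ) + 1) / ((H : ℝ) + i) *
            ∏ j ∈ Finset.Icc (i + 1) n, (1 - ((H : ℝ) + 1) / ((H : ℝ) + j))) *
            (1 - ((H : ℝ) + 1) / ((H : ℝ) + (n + 1 : ℕ))) := by
        intro i hi
        simp only [Finset.mem_Icc] at hi
        rw [Finset.prod_Icc_succ_top (by omega : i + 1 ≤ n + 1), ← mul_assoc]
      rw [Finset.sum_congr rfl hsplit, ← Finset.sum_mul, ih hn, one_mul]
      ring

/-- For `α_i = (H+1)/(H+i)` with `H ≥ 1`, the weights
`α_t^i = α_i * ∏_{j=i+1}^t (1 - α_j)` satisfy `∑_{i=1}^t (α_t^i)^2 ≤ 2H/t`. -/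
theorem stmt2 (H t : ℕ) (hH : 1 ≤ H) (ht : 1 ≤ t) :
    ∑ i ∈ Finset.Icc 1 t,
        (((H : ℝ) + 1) / ((H : ℝ) + i) *
          ∏ j ∈ Finset.Icc (i + 1) t, (1 - ((H : ℝ) + 1) / ((H : ℝ) + j))) ^ 2 ≤
      2 * (H : ℝ) / t := by
  set M : ℝ := ((H : ℝ) + 1) / ((H : ℝ) + t) with hM
  have hstep : ∑ i ∈ Finset.Icc 1 t,
      (((H : ℝ) + 1) / ((H : ℝ) + i) *
        ∏ j ∈ Finset.Icc (i + 1) t, (1 - ((H : ℝ) + 1) / ((H : ℝ) + j))) ^ 2 ≤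
      ∑ i ∈ Finset.Icc 1 t,
        (((H : ℝ) + 1) / ((H : ℝ) + i) *
          ∏ j ∈ Finset.Icc (i + 1) t, (1 - ((H : ℝ) + 1) / ((H : ℝ) + j))) * M := by
    apply Finset.sum_le_sum
    intro i hi
    simp only [Finset.mem_Icc] at hi
    rw [sq]
    exact mul_le_mul_of_nonneg_left (f_le H hH i hi.1 t hi.2) (f_nonneg H hH i t)
  rw [← Finset.sum_mul, f_sum H hH t ht, one_mul] at hstep
  refine hstep.trans ?_
  rw [hM]
  have h1 := hpos H hH t
  have ht' : (1:ℝ) ≤ (t:ℝ) := by exact_mod_cast ht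
  have hH1 : (1:ℝ) ≤ (H:ℝ) := by exact_mod_cast hH
  rw [div_le_div_iff₀ (by linarith) (by linarith)]
  nlinarith
end

section
/- For the sequence α_t = (H+1)/(H+t) with H ≥ 1, define α_t^i = α_i ∏_{j=i+1}^t (1-α_j). Then for every i ≥ 1, the infinite series ∑_{t=i}^∞ α_t^i converges and equals 1 + 1/H. -/
open Finset Filter

private lemma factor_eq (H : ℕ) (j : ℕ) (hj : 1 ≤ j) :
    1 - ((H : ℝ) + 1) / ((H : ℝ) + j) = ((j : ℝ) - 1) / ((H : ℝ) + j) := by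
  have h : (0:ℝ) < (H:ℝ) + j := by positivity
  field_simp
  ring

private lemma prod_nonneg' (H i n : ℕ) (hi : 1 ≤ i) :
    0 ≤ ∏ j ∈ Finset.Icc (i + 1) n, (1 - ((H : ℝ) + 1) / ((H : ℝ) + j)) := by
  apply Finset.prod_nonneg
  intro j hj
  have hj1 : 1 ≤ j := le_trans (by omega) (Finset.mem_Icc.mp hj).1
  rw [factor_eq H j hj1]
  have h1 : (0:ℝ) ≤ (j:ℝ) - 1 := by
    have : (1:ℝ) ≤ (j:ℝ) := by exact_mod_cast hj1
    linarith
  positivity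

private lemma partial_sum (H i : ℕ) (hH : 1 ≤ H) (hi : 1 ≤ i) (n : ℕ) (hn : i ≤ n) :
    ∑ t ∈ Finset.range (n + 1),
      (if i ≤ t then
          ((H : ℝ) + 1) / ((H : ℝ) + i) *
            ∏ j ∈ Finset.Icc (i + 1) t, (1 - ((H : ℝ) + 1) / ((H : ℝ) + j))
        else 0)
      = (1 + 1 / (H : ℝ)) -
        ((H : ℝ) + 1) / ((H : ℝ) * ((H : ℝ) + i)) * (((H : ℝ) + n + 1) *
          ∏ j ∈ Finset.Icc (i + 1) (n + 1), (1 - ((H : ℝ) + 1) / ((H : ℝ) + j))) := by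
  have hA : (1:ℝ) ≤ (H:ℝ) := by exact_mod_cast hH
  have hA0 : (0:ℝ) < (H:ℝ) := by linarith
  have hAi : (0:ℝ) < (H:ℝ) + i := by positivity
  induction n, hn using Nat.le_induction with
  | base =>
    rw [Finset.sum_eq_single i]
    · rw [if_pos le_rfl]
      have he : Finset.Icc (i+1) i = ∅ := by
        rw [Finset.Icc_eq_empty_iff]; omega
      rw [he, Finset.prod_empty]
      rw [Finset.Icc_self (i+1), Finset.prod_singleton]
      have hAi1 : (0:ℝ) < (H:ℝ) + ((i:ℝ)+1) := by positivity
      push_cast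
      field_simp
      ring
    · intro t ht hti
      have : ¬ i ≤ t := by
        have := Finset.mem_range.mp ht
        omega
      rw [if_neg this]
    · intro h
      exact absurd (Finset.mem_range.mpr (by omega)) h
  | succ n hn ih =>
    rw [Finset.sum_range_succ, ih, if_pos (by omega)]
    conv_rhs => rw [Finset.prod_Icc_succ_top (show i + 1 ≤ n + 1 + 1 by omega)
      (fun j => 1 - ((H : ℝ) + 1) / ((H : ℝ) + j))]
    generalize (∏ j ∈ Finset.Icc (i + 1) (n + 1), (1 - ((H : ℝ) + 1) / ((H : ℝ) + j))) = X
    have hAn : (0:ℝ) < (H:ℝ) + ((n:ℝ)+2) := by positivity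
    push_cast
    field_simp
    ring

private lemma telescope (i : ℕ) (hi : 1 ≤ i) (n : ℕ) (hn : i ≤ n) :
    ∏ j ∈ Finset.Icc (i + 1) n, (((j : ℝ) - 1) / ((j : ℝ) + 1))
      = ((i : ℝ) * ((i : ℝ) + 1)) / ((n : ℝ) * ((n : ℝ) + 1)) := by
  induction n, hn using Nat.le_induction with
  | base =>
    rw [Finset.Icc_eq_empty (by omega), Finset.prod_empty]
    have h0 : (0:ℝ) < i := by exact_mod_cast hi
    field_simp
  | succ n hn ih =>
    rw [Finset.prod_Icc_succ_top (by omega) (fun j => ((j : ℝ) - 1) / ((j : ℝ) + 1)), ih]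
    have hn0 : (0:ℝ) < n := by
      have : (1:ℝ) ≤ (n:ℝ) := by exact_mod_cast le_trans hi hn
      linarith
    push_cast
    field_simp
    ring

/-- For `α_i = (H+1)/(H+i)` with `H ≥ 1` and weights
`α_t^i = α_i * ∏_{j=i+1}^t (1 - α_j)` (for `t ≥ i`, and `0` for `t < i`),
the series `∑_{t=i}^∞ α_t^i` converges to `1 + 1/H`, for every `i ≥ 1`. -/
theorem stmt3 (H i : ℕ) (hH : 1 ≤ H) (hi : 1 ≤ i) :
    HasSum
      (fun t : ℕ =>
        if i ≤ t then
          ((H : ℝ) + 1) / ((H : ℝ) + i) *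
            ∏ j ∈ Finset.Icc (i + 1) t, (1 - ((H : ℝ) + 1) / ((H : ℝ) + j))
        else 0)
      (1 + 1 / (H : ℝ)) := by
  have hA : (1:ℝ) ≤ (H:ℝ) := by exact_mod_cast hH
  have hA0 : (0:ℝ) < (H:ℝ) := by linarith
  have hAi : (0:ℝ) < (H:ℝ) + i := by positivity
  have hi1 : (1:ℝ) ≤ (i:ℝ) := by exact_mod_cast hi
  set f : ℕ → ℝ := fun t : ℕ =>
      if i ≤ t then
        ((H : ℝ) + 1) / ((H : ℝ) + i) *
          ∏ j ∈ Finset.Icc (i + 1) t, (1 - ((H : ℝ) + 1) / ((H : ℝ) + j))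
      else 0 with hf
  have hfnonneg : ∀ t, 0 ≤ f t := by
    intro t
    rw [hf]
    dsimp only
    split
    · exact mul_nonneg (by positivity) (prod_nonneg' H i t hi)
    · exact le_refl 0
  rw [hasSum_iff_tendsto_nat_of_nonneg hfnonneg]
  rw [← Filter.tendsto_add_atTop_iff_nat (i + 1)]
  have heq : ∀ n : ℕ, (∑ t ∈ Finset.range (n + (i + 1)), f t)
      = (1 + 1 / (H : ℝ)) -
        ((H : ℝ) + 1) / ((H : ℝ) * ((H : ℝ) + i)) * (((H : ℝ) + (n + i) + 1) *
          ∏ j ∈ Finset.Icc (i + 1) ((n + i) + 1), (1 - ((H : ℝ) + 1) / ((H : ℝ) + j))) := by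
    intro n
    have := partial_sum H i hH hi (n + i) (by omega)
    rw [show n + (i + 1) = (n + i) + 1 by omega]
    rw [hf]
    push_cast at this ⊢
    convert this using 4
  simp only [heq]
  have h0 : Filter.Tendsto
      (fun n : ℕ => ((H : ℝ) + 1) / ((H : ℝ) * ((H : ℝ) + i)) * (((H : ℝ) + (n + i) + 1) *
        ∏ j ∈ Finset.Icc (i + 1) ((n + i) + 1), (1 - ((H : ℝ) + 1) / ((H : ℝ) + j))))
      Filter.atTop (nhds 0) := by
    set c : ℝ := ((H : ℝ) + 1) / ((H : ℝ) * ((H : ℝ) + i)) with hc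
    have hc0 : 0 ≤ c := by positivity
    apply squeeze_zero (g := fun n : ℕ => (c * (((H:ℝ)+1) * ((i:ℝ) * ((i:ℝ)+1)))) * (1 / ((n:ℝ) + i + 1)))
    · intro n
      have := prod_nonneg' H i ((n + i) + 1) hi
      positivity
    · intro n
      set m : ℕ := n + i with hm
      have hP : (0:ℝ) ≤ ∏ j ∈ Finset.Icc (i + 1) (m + 1), (1 - ((H : ℝ) + 1) / ((H : ℝ) + j)) :=
        prod_nonneg' H i (m + 1) hi
      have h1 : (∏ j ∈ Finset.Icc (i + 1) (m + 1), (1 - ((H : ℝ) + 1) / ((H : ℝ) + j)))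
          ≤ ((i : ℝ) * ((i : ℝ) + 1)) / (((m:ℝ)+1) * (((m:ℝ)+1) + 1)) := by
        have := telescope i hi (m + 1) (by omega)
        push_cast at this
        rw [← this]
        apply Finset.prod_le_prod
        · intro j hj
          have hj1 : 1 ≤ j := le_trans (by omega) (Finset.mem_Icc.mp hj).1
          rw [factor_eq H j hj1]
          have hjr : (1:ℝ) ≤ (j:ℝ) := by exact_mod_cast hj1
          apply div_nonneg (by linarith) (by positivity)
        · intro j hj
          have hj1 : 1 ≤ j := le_trans (by omega) (Finset.mem_Icc.mp hj).1
          rw [factor_eq H j hj1]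
          have hjr : (1:ℝ) ≤ (j:ℝ) := by exact_mod_cast hj1
          apply div_le_div_of_nonneg_left (by linarith) (by linarith) (by linarith)
      have hAm : ((H:ℝ) + m + 1) ≤ ((H:ℝ)+1) * ((m:ℝ)+2) := by nlinarith
      have h2 : ((H:ℝ) + m + 1) *
            (∏ j ∈ Finset.Icc (i + 1) (m + 1), (1 - ((H : ℝ) + 1) / ((H : ℝ) + j)))
          ≤ (((H:ℝ)+1) * ((m:ℝ)+2)) * (((i : ℝ) * ((i : ℝ) + 1)) / (((m:ℝ)+1) * (((m:ℝ)+1) + 1))) := by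
        apply mul_le_mul hAm h1 hP (by positivity)
      have h3 : (((H:ℝ)+1) * ((m:ℝ)+2)) * (((i : ℝ) * ((i : ℝ) + 1)) / (((m:ℝ)+1) * (((m:ℝ)+1) + 1)))
          = (((H:ℝ)+1) * ((i:ℝ) * ((i:ℝ)+1))) * (1 / ((m:ℝ)+1)) := by
        have : (0:ℝ) < (m:ℝ) + 1 := by positivity
        field_simp
        ring
      have h4 : ((n:ℝ) + i + 1) = ((m:ℝ) + 1) := by push_cast [hm]; ring
      calc c * (((H : ℝ) + (n + i) + 1) *
            ∏ j ∈ Finset.Icc (i + 1) ((n + i) + 1), (1 - ((H : ℝ) + 1) / ((H : ℝ) + j)))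
          ≤ c * ((((H:ℝ)+1) * ((i:ℝ) * ((i:ℝ)+1))) * (1 / ((m:ℝ)+1))) := by
            apply mul_le_mul_of_nonneg_left _ hc0
            rw [← h3]
            convert h2 using 3
            · rfl
            push_cast [hm]; ring
        _ = (c * (((H:ℝ)+1) * ((i:ℝ) * ((i:ℝ)+1)))) * (1 / ((n:ℝ) + i + 1)) := by
            rw [h4]; ring
    · have : Filter.Tendsto (fun n : ℕ => ((n:ℝ) + i + 1)) Filter.atTop Filter.atTop := by
        apply Filter.tendsto_atTop_add_const_right
        apply Filter.tendsto_atTop_add_const_right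
        exact tendsto_natCast_atTop_atTop
      have h5 : Filter.Tendsto (fun n : ℕ => 1 / ((n:ℝ) + i + 1)) Filter.atTop (nhds 0) := by
        simpa [Function.comp_def] using tendsto_inv_atTop_zero.comp this
      simpa using h5.const_mul (c * (((H:ℝ)+1) * ((i:ℝ) * ((i:ℝ)+1))))
  have := (tendsto_const_nhds (x := (1 + 1 / (H : ℝ))) (f := Filter.atTop (α := ℕ))).sub h0
  simpa using this
end
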